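/- If a nonzero vector w ∈ ℝ³ is written as w = t·w⁰ with t = ‖w‖ and w⁰ a unit vector with w⁰ ≠ (0,0,1), then the binary form associated (via the Cartan map) to the linear form x ↦ w·x factors as ψ(w·x)(u,v) = t·α·(u + λv)(λ̄u − v), where λ = τ(w⁰) is the stereographic projection of w⁰ from the north pole and α = 1/(|λ|²+1). -/

import Mathlib

open Complex

/-- **Binary form of a linear form via the Cartan map and stereographic projection**:
if `w = t w⁰` with `t = ‖w‖`, `w⁰` a unit vector, `w⁰ ≠ (0,0,1)`, then the binary form
`ψ(w·x)(u,v) = w·((u²−v²)/2, (u²+v²)/(2i), uv)` associated to the linear form `x ↦ w·x`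
factors as `t α (u + λv)(λ̄u − v)`, where `λ = τ(w⁰)` is the stereographic projection of
`w⁰` from the north pole and `α = 1/(|λ|² + 1)`. -/
theorem cartan_map_of_linear_form (w w0 : Fin 3 → ℝ) (t : ℝ)
    (ht : t = Real.sqrt (w 0 ^ 2 + w 1 ^ 2 + w 2 ^ 2))
    (hw0 : ∀ i, w i = t * w0 i)
    (hunit : w0 0 ^ 2 + w0 1 ^ 2 + w0 2 ^ 2 = 1)
    (hnp : w0 ≠ ![0, 0, 1])
    (lam : ℂ)
    (hlam : lam = ((w0 0 : ℂ) + (w0 1 : ℂ) * Complex.I) / (1 - (w0 2 : ℂ)))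
    (alpha : ℝ) (halpha : alpha = 1 / (Complex.normSq lam + 1)) :
    ∀ u v : ℂ,
      (w 0 : ℂ) * ((u ^ 2 - v ^ 2) / 2) + (w 1 : ℂ) * ((u ^ 2 + v ^ 2) / (2 * Complex.I)) +
          (w 2 : ℂ) * (u * v) =
        (t : ℂ) * (alpha : ℂ) * (u + lam * v) * (starRingEnd ℂ lam * u - v) := by
  intro u v
  -- w0 2 ≠ 1
  have h2 : w0 2 ≠ 1 := by
    intro h
    have h0 : w0 0 = 0 ∧ w0 1 = 0 := by constructor <;> nlinarith [sq_nonneg (w0 0), sq_nonneg (w0 1)]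
    apply hnp
    funext i
    fin_cases i <;> simp [h0.1, h0.2, h]
  have hcR : (1 : ℝ) - w0 2 ≠ 0 := sub_ne_zero.mpr (fun h => h2 h.symm)
  have hcC : (1 : ℂ) - (w0 2 : ℂ) ≠ 0 := by
    intro h
    apply hcR
    exact_mod_cast h
  -- normSq lam
  have hns : Complex.normSq lam = (w0 0 ^ 2 + w0 1 ^ 2) / (1 - w0 2) ^ 2 := by
    rw [hlam, Complex.normSq_div]
    congr 1
    · simpa using Complex.normSq_add_mul_I (w0 0) (w0 1)
    · have : (1 : ℂ) - (w0 2 : ℂ) = ((1 - w0 2 : ℝ) : ℂ) := by push_cast; ring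
      rw [this, Complex.normSq_ofReal]; ring
  have halpha' : alpha = (1 - w0 2) / 2 := by
    have hab : w0 0 ^ 2 + w0 1 ^ 2 = 1 - w0 2 ^ 2 := by linarith
    have h3 : Complex.normSq lam + 1 = 2 / (1 - w0 2) := by
      rw [hns, hab]; field_simp; ring
    rw [halpha, h3, one_div_div]
  have hconj : starRingEnd ℂ lam = ((w0 0 : ℂ) - (w0 1 : ℂ) * Complex.I) / (1 - (w0 2 : ℂ)) := by
    rw [hlam, map_div₀, map_add, map_sub, map_mul, map_one, Complex.conj_ofReal,
      Complex.conj_ofReal, Complex.conj_ofReal, Complex.conj_I]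
    ring
  rw [hw0 0, hw0 1, hw0 2, hconj, hlam, halpha']
  have hI : Complex.I ≠ 0 := Complex.I_ne_zero
  have hC : (w0 0 : ℂ) ^ 2 + (w0 1 : ℂ) ^ 2 + (w0 2 : ℂ) ^ 2 = 1 := by exact_mod_cast hunit
  push_cast
  field_simp
  ring_nf
  have hI2 : Complex.I ^ 2 = -1 := Complex.I_sq
  linear_combination (-(Complex.I * (t : ℂ) * u * v)) * hC +
    ((t : ℂ) * u * v * Complex.I * (w0 1 : ℂ) ^ 2 +
      (t : ℂ) * (u ^ 2 + v ^ 2) * (w0 1 : ℂ) * (1 - (w0 2 : ℂ))) * hI2
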